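/- Let X be an ℝᵈ-valued random variable and define ρ(y) := limsup_{ε→0⁺} P(X ∈ B_{ε,∞}(y))/vol(B_{ε,∞}(0)) ∈ [0,∞], where B_{ε,∞}(y) is the open ℓ^∞-ball of radius ε around y. If ρ is locally bounded, then the law of X is absolutely continuous with respect to Lebesgue measure and ρ is a version of its density, i.e. P(X ∈ A) = ∫_A ρ(x) dx for every Borel set A ⊆ ℝᵈ. -/

import Mathlib

open MeasureTheory Filter Metric


lemma vol_ball_pi {d : ℕ} {ε : ℝ} (hε : 0 < ε) (x : Fin d → ℝ) :
    volume (ball x ε) = ENNReal.ofReal ((2 * ε) ^ d) := by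
  rw [Real.volume_pi_ball x hε, Fintype.card_fin]

lemma vol_cball_pi {d : ℕ} {ε : ℝ} (hε : 0 ≤ ε) (x : Fin d → ℝ) :
    volume (closedBall x ε) = ENNReal.ofReal ((2 * ε) ^ d) := by
  rw [Real.volume_pi_closedBall x hε, Fintype.card_fin]

lemma aux_tendsto_open {d : ℕ} (μ : Measure (Fin d → ℝ)) (x : Fin d → ℝ) (L : ENNReal)
    (hx : Tendsto (fun r : ℝ => μ (closedBall x r) / volume (closedBall x r)) (nhdsWithin 0 (Set.Ioi 0)) (nhds L)) :
    Tendsto (fun ε : ℝ => μ (ball x ε) / volume (ball (0 : Fin d → ℝ) ε)) (nhdsWithin 0 (Set.Ioi 0)) (nhds L) := by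
  rw [tendsto_order]
  constructor
  · -- lower bound: ∀ c < L, eventually c < ratio_open
    intro c hc
    obtain ⟨c', hcc', hc'L⟩ := exists_between hc
    have hc'top : c' ≠ ⊤ := hc'L.ne_top
    -- choose δ ∈ (0,1) with c < ofReal ((1-δ)^d) * c'
    have htend : Tendsto (fun δ : ℝ => ENNReal.ofReal ((1 - δ) ^ d) * c') (nhds 0) (nhds c') := by
      have h1 : Tendsto (fun δ : ℝ => (1 - δ) ^ d) (nhds 0) (nhds 1) := by
        have hcont : Continuous (fun δ : ℝ => (1 - δ) ^ d) :=
          (continuous_const.sub continuous_id).pow d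
        have := hcont.tendsto (0 : ℝ)
        simpa using this
      have h2 : Tendsto (fun δ : ℝ => ENNReal.ofReal ((1 - δ) ^ d)) (nhds 0) (nhds 1) := by
        have := (ENNReal.continuous_ofReal.tendsto (1 : ℝ)).comp h1
        simpa [Function.comp_def] using this
      have := ENNReal.Tendsto.mul_const h2 (Or.inr hc'top)
      simpa using this
    have hev : ∀ᶠ δ : ℝ in nhds 0, c < ENNReal.ofReal ((1 - δ) ^ d) * c' :=
      htend.eventually_const_lt hcc'
    obtain ⟨δ, hδc, hδ0, hδ1⟩ :
        ∃ δ : ℝ, c < ENNReal.ofReal ((1 - δ) ^ d) * c' ∧ 0 < δ ∧ δ < 1 := by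
      have h3 : ∀ᶠ δ : ℝ in nhdsWithin 0 (Set.Ioi 0), δ ∈ Set.Ioo (0:ℝ) 1 :=
        Ioo_mem_nhdsGT_of_mem ⟨le_rfl, one_pos⟩
      obtain ⟨δ, h4, h5⟩ := ((hev.filter_mono nhdsWithin_le_nhds).and h3).exists
      exact ⟨δ, h4, h5.1, h5.2⟩
    set k := ENNReal.ofReal ((1 - δ) ^ d) with hk
    have hδd : 0 < (1 - δ) ^ d := pow_pos (by linarith) d
    have hk0 : k ≠ 0 := by simp [hk, ENNReal.ofReal_pos.2 hδd, ne_of_gt]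
    have hktop : k ≠ ⊤ := ENNReal.ofReal_ne_top
    -- eventually c' < ratio_closed (ε * (1-δ))
    have hmap : Tendsto (fun ε : ℝ => ε * (1 - δ)) (nhdsWithin 0 (Set.Ioi 0)) (nhdsWithin 0 (Set.Ioi 0)) := by
      apply tendsto_nhdsWithin_of_tendsto_nhds_of_eventually_within
      · have h0 : Tendsto (fun ε : ℝ => ε) (nhdsWithin 0 (Set.Ioi 0)) (nhds 0) :=
          tendsto_id.mono_left nhdsWithin_le_nhds
        have := h0.mul_const (1 - δ)
        simpa using this
      · filter_upwards [self_mem_nhdsWithin] with ε (hε : 0 < ε)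
        exact mul_pos hε (by linarith)
    have hev2 : ∀ᶠ ε : ℝ in nhdsWithin 0 (Set.Ioi 0),
        c' < μ (closedBall x (ε * (1 - δ))) / volume (closedBall x (ε * (1 - δ))) :=
      hmap.eventually (hx.eventually_const_lt hc'L)
    filter_upwards [hev2, self_mem_nhdsWithin] with ε h1ε (h2ε : 0 < ε)
    set r := ε * (1 - δ) with hr
    have hrpos : 0 < r := mul_pos h2ε (by linarith)
    have hrlt : r < ε := by
      rw [hr]; nlinarith
    have hVball : volume (ball (0 : Fin d → ℝ) ε) = ENNReal.ofReal ((2 * ε) ^ d) :=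
      vol_ball_pi h2ε _
    have hVr : volume (closedBall x r) = k * ENNReal.ofReal ((2 * ε) ^ d) := by
      rw [vol_cball_pi hrpos.le, hk, ← ENNReal.ofReal_mul (le_of_lt hδd)]
      congr 1
      rw [← mul_pow]
      rw [hr]
      ring_nf
    calc c < k * c' := hδc
      _ ≤ k * (μ (closedBall x r) / volume (closedBall x r)) :=
          mul_le_mul_right h1ε.le k
      _ = k * μ (closedBall x r) / (k * ENNReal.ofReal ((2 * ε) ^ d)) := by
          rw [hVr, mul_div_assoc]
      _ = μ (closedBall x r) / ENNReal.ofReal ((2 * ε) ^ d) :=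
          ENNReal.mul_div_mul_left _ _ hk0 hktop
      _ ≤ μ (ball x ε) / volume (ball (0 : Fin d → ℝ) ε) := by
          rw [hVball]
          exact ENNReal.div_le_div_right (measure_mono (closedBall_subset_ball hrlt)) _
  · -- upper bound
    intro c hc
    filter_upwards [hx.eventually_lt_const hc, self_mem_nhdsWithin] with ε h1ε (h2ε : 0 < ε)
    refine lt_of_le_of_lt ?_ h1ε
    rw [vol_ball_pi h2ε, vol_cball_pi h2ε.le]
    exact ENNReal.div_le_div_right (measure_mono ball_subset_closedBall) _


theorem density_from_limsup {Ω : Type*} [MeasureSpace Ω] (P : Measure Ω)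
    [IsProbabilityMeasure P] (d : ℕ) (hd : 0 < d)
    (X : Ω → (Fin d → ℝ)) (hX : Measurable X)
    (ρ : (Fin d → ℝ) → ENNReal)
    (hρ : ∀ y, ρ y = Filter.limsup
      (fun ε : ℝ => Measure.map X P (Metric.ball y ε) /
        volume (Metric.ball (0 : Fin d → ℝ) ε)) (nhdsWithin 0 (Set.Ioi 0)))
    (hloc : ∀ K : Set (Fin d → ℝ), IsCompact K →
      ∃ M : ENNReal, M < ⊤ ∧ ∀ y ∈ K, ρ y ≤ M) :
    ∀ A : Set (Fin d → ℝ), MeasurableSet A →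
      Measure.map X P A = ∫⁻ x in A, ρ x := by
  intro A hA
  set μ := Measure.map X P with hμdef
  haveI : IsProbabilityMeasure μ := Measure.isProbabilityMeasure_map hX.aemeasurable
  -- ρ agrees a.e. (volume) with the Radon–Nikodym derivative
  have hρae : ρ =ᶠ[ae volume] μ.rnDeriv volume := by
    filter_upwards [Besicovitch.ae_tendsto_rnDeriv μ volume] with x hx
    have := (aux_tendsto_open μ x _ hx).limsup_eq
    rw [hρ x]
    exact this
  -- positivity of volume.rnDeriv μ, μ-a.e.
  have hpos : ∀ᵐ x ∂μ, 0 < volume.rnDeriv μ x := by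
    filter_upwards [Besicovitch.ae_tendsto_rnDeriv volume μ] with x hx
    obtain ⟨M, hMtop, hM⟩ := hloc {x} isCompact_singleton
    have hMx : ρ x ≤ M := hM x rfl
    have hMlt : M < M + 1 := ENNReal.lt_add_right hMtop.ne one_ne_zero
    have hlim : limsup (fun ε : ℝ => μ (ball x ε) / volume (ball (0 : Fin d → ℝ) ε))
        (nhdsWithin 0 (Set.Ioi 0)) < M + 1 := by
      rw [← hρ x]; exact lt_of_le_of_lt hMx hMlt
    have hev : ∀ᶠ ε : ℝ in nhdsWithin 0 (Set.Ioi 0),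
        μ (ball x ε) / volume (ball (0 : Fin d → ℝ) ε) < M + 1 :=
      Filter.eventually_lt_of_limsup_lt hlim
    obtain ⟨η, hη, hηs⟩ := mem_nhdsGT_iff_exists_Ioo_subset.1 hev
    have hη' : (0:ℝ) < η := hη
    set C := (M + 1) * ENNReal.ofReal (2 ^ d) with hC
    have hCtop : C ≠ ⊤ := by
      simp [hC, ENNReal.mul_ne_top, ENNReal.add_ne_top, hMtop.ne]
    have hCinv : (0 : ENNReal) < C⁻¹ := ENNReal.inv_pos.2 hCtop
    have hlow : ∀ᶠ r : ℝ in nhdsWithin 0 (Set.Ioi 0),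
        C⁻¹ ≤ volume (closedBall x r) / μ (closedBall x r) := by
      have hmem : Set.Ioo (0:ℝ) (η / 2) ∈ nhdsWithin 0 (Set.Ioi 0) :=
        Ioo_mem_nhdsGT_of_mem ⟨le_rfl, half_pos hη'⟩
      filter_upwards [hmem] with r hr
      have hrpos : 0 < r := hr.1
      have h2r : (2 : ℝ) * r ∈ Set.Ioo (0:ℝ) η := ⟨by linarith, by linarith [hr.2]⟩
      have hlt : μ (ball x (2 * r)) / volume (ball (0 : Fin d → ℝ) (2 * r)) < M + 1 := hηs h2r
      have hvne : volume (ball (0 : Fin d → ℝ) (2 * r)) ≠ 0 := by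
        rw [vol_ball_pi (by linarith : (0:ℝ) < 2 * r)]
        simp only [ne_eq, ENNReal.ofReal_eq_zero, not_le]
        positivity
      have hvtop : volume (ball (0 : Fin d → ℝ) (2 * r)) ≠ ⊤ := by
        rw [vol_ball_pi (by linarith : (0:ℝ) < 2 * r)]
        exact ENNReal.ofReal_ne_top
      have hVcb : volume (closedBall x r) = ENNReal.ofReal ((2 * r) ^ d) :=
        vol_cball_pi hrpos.le x
      have hV2 : volume (ball (0 : Fin d → ℝ) (2 * r))
          = ENNReal.ofReal (2 ^ d) * ENNReal.ofReal ((2 * r) ^ d) := by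
        rw [vol_ball_pi (by linarith : (0:ℝ) < 2 * r), ← ENNReal.ofReal_mul (by positivity)]
        congr 1
        rw [← mul_pow]
      have hsub : closedBall x r ⊆ ball x (2 * r) :=
        closedBall_subset_ball (by linarith)
      have hμcb : μ (closedBall x r) ≤ C * volume (closedBall x r) := by
        have h1 : μ (closedBall x r) ≤ μ (ball x (2 * r)) := measure_mono hsub
        have h2 : μ (ball x (2 * r)) < (M + 1) * volume (ball (0 : Fin d → ℝ) (2 * r)) :=
          (ENNReal.div_lt_iff (Or.inl hvne) (Or.inl hvtop)).1 hlt
        calc μ (closedBall x r) ≤ μ (ball x (2 * r)) := h1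
          _ ≤ (M + 1) * volume (ball (0 : Fin d → ℝ) (2 * r)) := h2.le
          _ = C * volume (closedBall x r) := by
              rw [hV2, hVcb, hC]; ring
      have hVne0 : volume (closedBall x r) ≠ 0 := by
        rw [hVcb]
        simp only [ne_eq, ENNReal.ofReal_eq_zero, not_le]
        positivity
      have hVnetop : volume (closedBall x r) ≠ ⊤ := by
        rw [hVcb]; exact ENNReal.ofReal_ne_top
      calc C⁻¹ = 1 / C := (one_div C).symm
        _ = volume (closedBall x r) * 1 / (volume (closedBall x r) * C) :=
            (ENNReal.mul_div_mul_left _ _ hVne0 hVnetop).symm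
        _ = volume (closedBall x r) / (volume (closedBall x r) * C) := by rw [mul_one]
        _ ≤ volume (closedBall x r) / μ (closedBall x r) :=
            ENNReal.div_le_div_left (by rw [mul_comm] at hμcb; exact hμcb) _
    exact lt_of_lt_of_le hCinv (ge_of_tendsto hx hlow)
  -- absolute continuity
  have habs : μ ≪ volume := by
    rw [← Measure.singularPart_eq_zero μ volume]
    obtain ⟨s, hs, h1, h2⟩ := Measure.mutuallySingular_singularPart μ volume
    have hμsc : μ sᶜ = 0 := by
      have hle : (μ.withDensity (volume.rnDeriv μ)) sᶜ ≤ volume sᶜ :=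
        Measure.le_iff'.1 (Measure.withDensity_rnDeriv_le volume μ) sᶜ
      rw [h2] at hle
      have h0 : ∫⁻ y in sᶜ, volume.rnDeriv μ y ∂μ = 0 := by
        rw [← withDensity_apply _ hs.compl]
        exact le_antisymm hle zero_le
      have hzero : volume.rnDeriv μ =ᶠ[ae (μ.restrict sᶜ)] 0 :=
        (lintegral_eq_zero_iff (Measure.measurable_rnDeriv _ _)).1 h0
      have hposr : ∀ᵐ y ∂(μ.restrict sᶜ), 0 < volume.rnDeriv μ y :=
        ae_restrict_of_ae hpos
      have : ∀ᵐ (_ : Fin d → ℝ) ∂(μ.restrict sᶜ), False := by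
        filter_upwards [hzero, hposr] with y hy1 hy2
        simp [hy1] at hy2
      have hr0 : μ.restrict sᶜ = 0 := by
        rwa [← ae_eq_bot, ← Filter.eventually_false_iff_eq_bot]
      have := Measure.restrict_apply_self μ sᶜ
      rw [hr0] at this
      simpa using this.symm
    have hts : μ.singularPart volume sᶜ ≤ μ sᶜ :=
      Measure.le_iff'.1 (Measure.singularPart_le μ volume) sᶜ
    have huniv : μ.singularPart volume Set.univ = 0 := by
      have : μ.singularPart volume Set.univ ≤ μ.singularPart volume s + μ.singularPart volume sᶜ := by
        rw [← Set.union_compl_self s]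
        exact measure_union_le _ _
      rw [h1, zero_add] at this
      exact le_antisymm (this.trans (hts.trans_eq hμsc)) zero_le
    exact Measure.measure_univ_eq_zero.1 huniv
  -- conclude
  rw [show ∫⁻ x in A, ρ x = ∫⁻ x in A, μ.rnDeriv volume x from
    lintegral_congr_ae (ae_restrict_of_ae hρae),
    ← withDensity_apply _ hA, Measure.withDensity_rnDeriv_eq μ volume habs]
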